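/- arXiv:2403.18472 — 4 statements merged into one kernel-verified Lean document; each statement's English description precedes it below -/
import Mathlib

section
/- Let H be a finite-dimensional real inner product space and A : H → H a self-adjoint positive-definite linear operator. For σ ≥ 1/2 and τ > 0, if y¹ satisfies (I + στA) y¹ = (I − (1−σ)τA) y⁰ (a homogeneous weighted two-level scheme step), then ‖y¹‖ ≤ ‖y⁰‖. -/
open scoped RealInnerProductSpace
open Finset LinearMap

theorem stmt_0 {H : Type*} [NormedAddCommGroup H] [InnerProductSpace ℝ H]
    [FiniteDimensional ℝ H] (A : H →ₗ[ℝ] H) (hA : A.IsSymmetric)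
    (hApos : ∀ u : H, u ≠ 0 → 0 < ⟪A u, u⟫)
    (σ τ : ℝ) (hσ : 1 / 2 ≤ σ) (hτ : 0 < τ) (y0 y1 : H)
    (hscheme : y1 + (σ * τ) • A y1 = y0 - ((1 - σ) * τ) • A y0) :
    ‖y1‖ ≤ ‖y0‖ := by
  set m : H := σ • y1 + (1 - σ) • y0 with hm
  have h1 : y1 - y0 = (-τ) • A m := by
    rw [hm, map_add, map_smul, map_smul, smul_add, smul_smul, smul_smul]
    have h : y1 - y0 = y0 - ((1 - σ) * τ) • A y0 - (σ * τ) • A y1 - y0 := by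
      rw [← hscheme]; abel
    rw [h, show -τ * σ = -(σ * τ) by ring, show -τ * (1 - σ) = -((1 - σ) * τ) by ring,
      neg_smul, neg_smul]
    abel
  have hAm : 0 ≤ ⟪A m, m⟫ := by
    rcases eq_or_ne m 0 with h | h
    · simp [h]
    · exact (hApos m h).le
  have hsum : y1 + y0 = (2 : ℝ) • m - (2 * σ - 1) • (y1 - y0) := by
    rw [hm]; module
  have hinner : ⟪y1 - y0, y1 + y0⟫ = ‖y1‖ ^ 2 - ‖y0‖ ^ 2 := by
    rw [inner_sub_left, inner_add_right, inner_add_right,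
      real_inner_self_eq_norm_sq, real_inner_self_eq_norm_sq, real_inner_comm y0 y1]
    ring
  have hwm : ⟪y1 - y0, m⟫ = -τ * ⟪A m, m⟫ := by
    rw [h1, real_inner_smul_left]
  have hdiff : ‖y1‖ ^ 2 - ‖y0‖ ^ 2 ≤ 0 := by
    rw [← hinner, hsum, inner_sub_right, real_inner_smul_right, real_inner_smul_right,
      hwm, real_inner_self_eq_norm_sq]
    have h2 : 0 ≤ τ * ⟪A m, m⟫ := mul_nonneg hτ.le hAm
    have h3 : 0 ≤ (2 * σ - 1) * ‖y1 - y0‖ ^ 2 :=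
      mul_nonneg (by linarith) (sq_nonneg _)
    linarith
  calc ‖y1‖ = Real.sqrt (‖y1‖ ^ 2) := (Real.sqrt_sq (norm_nonneg _)).symm
    _ ≤ Real.sqrt (‖y0‖ ^ 2) := Real.sqrt_le_sqrt (by linarith)
    _ = ‖y0‖ := Real.sqrt_sq (norm_nonneg _)
end

section
/- Let H be a finite-dimensional real inner product space, A : H → H self-adjoint and positive-definite, σ ≥ 1/2, τ > 0, and f ∈ H. If y¹ satisfies (y¹ − y⁰)/τ + A(σ y¹ + (1−σ) y⁰) = f, then ‖y¹‖²_A ≤ ‖y⁰‖²_A + (τ/2)‖f‖², where ‖v‖²_A = ⟨A v, v⟩. -/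
open scoped RealInnerProductSpace
open Finset LinearMap

theorem stmt_1 {H : Type*} [NormedAddCommGroup H] [InnerProductSpace ℝ H]
    [FiniteDimensional ℝ H] (A : H →ₗ[ℝ] H) (hA : A.IsSymmetric)
    (hApos : ∀ u : H, u ≠ 0 → 0 < ⟪A u, u⟫)
    (σ τ : ℝ) (hσ : 1 / 2 ≤ σ) (hτ : 0 < τ) (f y0 y1 : H)
    (hscheme : (1 / τ) • (y1 - y0) + A (σ • y1 + (1 - σ) • y0) = f) :
    ⟪A y1, y1⟫ ≤ ⟪A y0, y0⟫ + (τ / 2) * ‖f‖ ^ 2 := by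
  have hsym : ⟪A y0, y1⟫ = ⟪A y1, y0⟫ := by
    rw [hA y0 y1, real_inner_comm]
  have hAδ : (0:ℝ) ≤ ⟪A (y1 - y0), y1 - y0⟫ := by
    by_cases h : y1 - y0 = 0
    · simp [h]
    · exact (hApos _ h).le
  have hAδexp : ⟪A (y1 - y0), y1 - y0⟫
      = ⟪A y1, y1⟫ - 2 * ⟪A y1, y0⟫ + ⟪A y0, y0⟫ := by
    simp only [map_sub, inner_sub_left, inner_sub_right, hsym]
    ring
  have hexp : (1/τ) * ⟪y1 - y0, y1 - y0⟫
      + ⟪A (σ • y1 + (1-σ) • y0), y1 - y0⟫ = ⟪f, y1 - y0⟫ := by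
    rw [← hscheme, inner_add_left, real_inner_smul_left]
  have hexp2 : ⟪A (σ • y1 + (1-σ) • y0), y1 - y0⟫
      = σ * (⟪A y1, y1⟫ - ⟪A y1, y0⟫) + (1-σ) * (⟪A y1, y0⟫ - ⟪A y0, y0⟫) := by
    simp only [map_add, map_smul, inner_add_left, inner_sub_right,
      real_inner_smul_left, hsym]
    ring
  have hCS : ⟪f, y1 - y0⟫ ≤ ‖f‖ * ‖y1 - y0‖ := real_inner_le_norm f (y1 - y0)
  have hδn : ⟪y1 - y0, y1 - y0⟫ = ‖y1 - y0‖ ^ 2 := real_inner_self_eq_norm_sq _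
  rw [hexp2, hδn] at hexp
  rw [hAδexp] at hAδ
  have hexp' : ‖y1 - y0‖ ^ 2
      + τ * (σ * (⟪A y1, y1⟫ - ⟪A y1, y0⟫) + (1-σ) * (⟪A y1, y0⟫ - ⟪A y0, y0⟫))
      = τ * ⟪f, y1 - y0⟫ := by
    have h2 := congrArg (fun x => τ * x) hexp
    field_simp at h2
    linarith
  have hn : (0:ℝ) ≤ ‖y1 - y0‖ := norm_nonneg _
  have hf : (0:ℝ) ≤ ‖f‖ := norm_nonneg _
  nlinarith [hexp', sq_nonneg (τ * ‖f‖ - 2 * ‖y1 - y0‖),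
    mul_nonneg (mul_nonneg hτ.le (by linarith : (0:ℝ) ≤ 2*σ - 1)) hAδ,
    mul_le_mul_of_nonneg_left hCS hτ.le, hτ, sq_nonneg ‖y1 - y0‖]
end

section
/- Let H be a finite-dimensional real inner product space and A self-adjoint nonnegative, τ > 0, σ ≥ 1/2. Then the transition operator S = I − τ(I + στA)^{-1}A satisfies ‖S u‖ ≤ ‖u‖ for all u ∈ H. -/
open scoped RealInnerProductSpace
open Finset LinearMap

theorem stmt_7 {H : Type*} [NormedAddCommGroup H] [InnerProductSpace ℝ H]
    [FiniteDimensional ℝ H] (A : H →ₗ[ℝ] H) (hA : A.IsSymmetric)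
    (hApos : ∀ u : H, 0 ≤ ⟪A u, u⟫) (σ τ : ℝ) (hσ : 1 / 2 ≤ σ) (hτ : 0 < τ)
    (B : H →ₗ[ℝ] H)
    (hB₁ : (LinearMap.id + (σ * τ) • A) ∘ₗ B = LinearMap.id)
    (hB₂ : B ∘ₗ (LinearMap.id + (σ * τ) • A) = LinearMap.id) :
    ∀ u : H, ‖(LinearMap.id - τ • (B ∘ₗ A) : H →ₗ[ℝ] H) u‖ ≤ ‖u‖ := by
  intro u
  set w := B u with hw
  -- u = w + στ • A w
  have hu : u = w + (σ * τ) • A w := by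
    have := congrArg (fun f : H →ₗ[ℝ] H => f u) hB₁
    simpa using this.symm
  -- B (A u) = A w
  have hBA : B (A u) = A w := by
    have hAu : A u = A w + (σ * τ) • A (A w) := by
      rw [hu]; simp [map_add, map_smul]
    have := congrArg (fun f : H →ₗ[ℝ] H => f (A w)) hB₂
    simp only [LinearMap.comp_apply, LinearMap.add_apply, LinearMap.id_apply,
      LinearMap.smul_apply] at this
    rw [hAu]
    simpa [map_add, map_smul] using this
  -- rewrite S u
  have hS : (LinearMap.id - τ • (B ∘ₗ A) : H →ₗ[ℝ] H) u = w + ((σ - 1) * τ) • A w := by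
    simp only [LinearMap.sub_apply, LinearMap.id_apply, LinearMap.smul_apply,
      LinearMap.comp_apply, hBA]
    rw [hu]
    module
  rw [hS, hu]
  have key : ‖w + ((σ - 1) * τ) • A w‖ ^ 2 ≤ ‖w + (σ * τ) • A w‖ ^ 2 := by
    rw [norm_add_sq_real, norm_add_sq_real]
    rw [real_inner_smul_right, real_inner_smul_right, norm_smul, norm_smul]
    have hpos : (0:ℝ) ≤ ⟪w, A w⟫ := by
      have := hApos w
      rwa [real_inner_comm] at this
    have hn : (0:ℝ) ≤ ‖A w‖ ^ 2 := sq_nonneg _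
    simp only [Real.norm_eq_abs, sq_abs, mul_pow]
    nlinarith [mul_nonneg hτ.le hpos, mul_nonneg (mul_nonneg (by linarith : (0:ℝ) ≤ 2*σ-1) (sq_nonneg τ)) hn]
  calc ‖w + ((σ - 1) * τ) • A w‖
      = Real.sqrt (‖w + ((σ - 1) * τ) • A w‖ ^ 2) := by
        rw [Real.sqrt_sq (norm_nonneg _)]
    _ ≤ Real.sqrt (‖w + (σ * τ) • A w‖ ^ 2) := Real.sqrt_le_sqrt key
    _ = ‖w + (σ * τ) • A w‖ := Real.sqrt_sq (norm_nonneg _)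
end

section
/- Let H be a finite-dimensional real inner product space, p ≥ 1, and A₁,…,A_p self-adjoint nonnegative operators on H with A = ∑_α A_α self-adjoint positive-definite. Suppose σ ≥ p/2 and τ > 0. If for each α, y_α¹ satisfies (y_α¹ − y⁰)/(pτ) + (I + στA_α)^{-1} A_α y⁰ = 0 and y¹ = (1/p)∑_{α=1}^p y_α¹, then ‖y_α¹‖ ≤ ‖y⁰‖ for each α, and hence ‖y¹‖ ≤ ‖y⁰‖. -/
open scoped RealInnerProductSpace
open Finset LinearMap

theorem stmt_8 {H : Type*} [NormedAddCommGroup H] [InnerProductSpace ℝ H]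
    [FiniteDimensional ℝ H] (p : ℕ) (hp : 1 ≤ p)
    (A : Fin p → (H →ₗ[ℝ] H)) (hAsym : ∀ α, (A α).IsSymmetric)
    (hApos : ∀ α, ∀ u : H, 0 ≤ ⟪A α u, u⟫)
    (hsumpos : ∀ u : H, u ≠ 0 → 0 < ⟪(∑ α, A α) u, u⟫)
    (σ τ : ℝ) (hσ : (p : ℝ) / 2 ≤ σ) (hτ : 0 < τ)
    (B : Fin p → (H →ₗ[ℝ] H))
    (hB₁ : ∀ α, (LinearMap.id + (σ * τ) • A α) ∘ₗ B α = LinearMap.id)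
    (hB₂ : ∀ α, B α ∘ₗ (LinearMap.id + (σ * τ) • A α) = LinearMap.id)
    (y0 : H) (y1 : Fin p → H)
    (hscheme : ∀ α, (1 / ((p : ℝ) * τ)) • (y1 α - y0) + B α (A α y0) = 0)
    (y1avg : H) (havg : y1avg = ((p : ℝ)⁻¹) • ∑ α, y1 α) :
    (∀ α, ‖y1 α‖ ≤ ‖y0‖) ∧ ‖y1avg‖ ≤ ‖y0‖ := by
  have hp0 : (0:ℝ) < (p:ℝ) := by exact_mod_cast hp
  have hc : (0:ℝ) < (p:ℝ) * τ := by positivity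
  have key : ∀ α, ‖y1 α‖ ≤ ‖y0‖ := by
    intro α
    set w := B α (A α y0) with hw
    -- y1 α = y0 - (pτ) • w
    have h1 : (1 / ((p:ℝ)*τ)) • (y1 α - y0) = -w := by
      rw [← add_eq_zero_iff_eq_neg]; exact hscheme α
    have h2 : y1 α - y0 = -(((p:ℝ)*τ) • w) := by
      calc y1 α - y0 = ((p:ℝ)*τ) • ((1/((p:ℝ)*τ)) • (y1 α - y0)) := by
            rw [smul_smul]; field_simp; rw [one_smul]
        _ = -(((p:ℝ)*τ) • w) := by rw [h1, smul_neg]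
    have hy1 : y1 α = y0 - ((p:ℝ)*τ) • w := by
      rw [sub_eq_iff_eq_add] at h2
      rw [h2]; abel
    -- A α y0 = w + στ • A α w
    have hAw : A α y0 = w + (σ*τ) • A α w := by
      have h := congrArg (fun f : H →ₗ[ℝ] H => f (A α y0)) (hB₁ α)
      simpa [LinearMap.comp_apply, LinearMap.add_apply, LinearMap.smul_apply] using h.symm
    set v := y0 - (σ*τ) • w with hv
    have hAv : A α v = w := by
      rw [hv, map_sub, map_smul, hAw]; abel
    have hq : 0 ≤ ⟪A α v, v⟫ := hApos α v
    have hvw : ⟪y0, w⟫ = ⟪A α v, v⟫ + σ*τ*‖w‖^2 := by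
      have hy0 : y0 = v + (σ*τ) • w := by rw [hv]; abel
      rw [hy0, inner_add_left, real_inner_smul_left, ← hAv, real_inner_comm,
        real_inner_self_eq_norm_sq, hAv]
    have hnormsq : ‖y1 α‖^2 = ‖y0‖^2 - 2*((p:ℝ)*τ) * ⟪y0, w⟫ + ((p:ℝ)*τ)^2 * ‖w‖^2 := by
      rw [hy1, @norm_sub_sq_real, real_inner_smul_right, norm_smul, mul_pow,
        Real.norm_eq_abs, abs_of_pos hc]
      ring
    have hle : ‖y1 α‖^2 ≤ ‖y0‖^2 := by
      rw [hnormsq, hvw]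
      have h2σ : (p:ℝ)*τ ≤ 2*σ*τ := by nlinarith
      nlinarith [sq_nonneg ‖w‖, mul_nonneg hc.le hq,
        mul_nonneg (mul_nonneg hc.le (sub_nonneg.2 h2σ)) (sq_nonneg ‖w‖)]
    nlinarith [norm_nonneg (y1 α), norm_nonneg y0]
  refine ⟨key, ?_⟩
  have hsum : ‖∑ α, y1 α‖ ≤ (p:ℝ) * ‖y0‖ := by
    calc ‖∑ α, y1 α‖ ≤ ∑ _α : Fin p, ‖y0‖ :=
          le_trans (norm_sum_le _ _) (Finset.sum_le_sum fun α _ => key α)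
      _ = (p:ℝ) * ‖y0‖ := by simp [mul_comm]
  calc ‖y1avg‖ = (p:ℝ)⁻¹ * ‖∑ α, y1 α‖ := by
        rw [havg, norm_smul, Real.norm_eq_abs, abs_of_pos (inv_pos.2 hp0)]
    _ ≤ (p:ℝ)⁻¹ * ((p:ℝ) * ‖y0‖) := by
        exact mul_le_mul_of_nonneg_left hsum (inv_pos.2 hp0).le
    _ = ‖y0‖ := by field_simp
end
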